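/- Let m ∈ ℕ, m ≥ 1, and (m-1)/m < λ ≤ m/(m+1). If z = (x₀, y₀) with x₀ < -m/λ and y₀ ≥ 0, then the set of limit points of {Aⁿ(z)} is exactly {(-m, 0), (0, -m)}. -/

import Mathlib

noncomputable def A (l : ℝ) : ℝ × ℝ → ℝ × ℝ := fun p => ((⌊l * p.2⌋ : ℤ), (⌊l * p.1⌋ : ℤ))

theorem stmt12 (m : ℕ) (hm : 1 ≤ m) (l : ℝ)
    (h1 : ((m : ℝ) - 1) / m < l) (h2 : l ≤ (m : ℝ) / (m + 1))
    (x y : ℝ) (hx : x < -(m : ℝ) / l) (hy : 0 ≤ y) :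
    {p : ℝ × ℝ | MapClusterPt p Filter.atTop (fun n => (A l)^[n] (x, y))}
      = {((-(m : ℝ)), (0 : ℝ)), ((0 : ℝ), (-(m : ℝ)))} := by
  have hm1 : (1:ℝ) ≤ m := by exact_mod_cast hm
  have hmpos : (0:ℝ) < m := by linarith
  have hl0 : 0 < l := lt_of_le_of_lt (div_nonneg (by linarith) (by linarith)) h1
  have hlm : (m:ℝ) - 1 < l * m := by
    have := (div_lt_iff₀ hmpos).1 h1; linarith
  have hlm2 : l * ((m:ℝ) + 1) ≤ m := (le_div_iff₀ (by positivity)).1 h2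
  have hl1 : l < 1 := by nlinarith
  set g : ℤ → ℤ := fun n => ⌊l * (n:ℝ)⌋ with hgdef
  have hg0 : g 0 = 0 := by simp [hgdef]
  have hgm : g (-(m:ℤ)) = -(m:ℤ) := by
    rw [hgdef]
    rw [Int.floor_eq_iff]
    constructor
    · push_cast; nlinarith
    · push_cast; nlinarith
  have hgpos : ∀ n : ℤ, 0 < n → 0 ≤ g n ∧ g n < n := by
    intro n hn
    have hn1 : (1:ℝ) ≤ (n:ℝ) := by exact_mod_cast hn
    constructor
    · apply Int.le_floor.2; push_cast; positivity
    · apply Int.floor_lt.2; nlinarith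
  have hgneg : ∀ n : ℤ, n ≤ -((m:ℤ)+1) → n < g n ∧ g n ≤ -(m:ℤ) := by
    intro n hn
    have hn' : (n:ℝ) ≤ -((m:ℝ)+1) := by exact_mod_cast hn
    have hkey : l * ((m:ℝ)+1) ≤ l * (-(n:ℝ)) :=
      mul_le_mul_of_nonneg_left (by linarith) hl0.le
    have hkey2 : (1-l) * ((m:ℝ)+1) ≤ (1-l) * (-(n:ℝ)) :=
      mul_le_mul_of_nonneg_left (by linarith) (by linarith)
    constructor
    · have : n + 1 ≤ g n := by
        apply Int.le_floor.2; push_cast; nlinarith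
      omega
    · have : g n < -(m:ℤ) + 1 := by
        apply Int.floor_lt.2; push_cast; nlinarith
      omega
  have iter_pos : ∀ k : ℕ, ∀ p : ℤ, 0 ≤ p → p ≤ (k:ℤ) → g^[k] p = 0 := by
    intro k
    induction k with
    | zero => intro p hp1 hp2; have : p = 0 := le_antisymm (by exact_mod_cast hp2) hp1; simp [this]
    | succ k ih =>
      intro p hp1 hp2
      rw [Function.iterate_succ_apply]
      rcases eq_or_lt_of_le hp1 with h | h
      · rw [← h, hg0]; exact ih 0 le_rfl (by positivity)
      · obtain ⟨h1', h2'⟩ := hgpos p h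
        exact ih (g p) h1' (by omega)
  have iter_neg : ∀ k : ℕ, ∀ p : ℤ, -((m:ℤ)+k) ≤ p → p ≤ -(m:ℤ) → g^[k] p = -(m:ℤ) := by
    intro k
    induction k with
    | zero => intro p hp1 hp2; have : p = -(m:ℤ) := by omega
              simp [this]
    | succ k ih =>
      intro p hp1 hp2
      rw [Function.iterate_succ_apply]
      rcases eq_or_lt_of_le hp2 with h | h
      · rw [h, hgm]; exact ih (-(m:ℤ)) (by omega) le_rfl
      · obtain ⟨h1', h2'⟩ := hgneg p (by omega)
        exact ih (g p) (by push_cast at hp1 ⊢; omega) h2'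
  have iterA : ∀ k : ℕ, ∀ p q : ℤ, (A l)^[k] ((p:ℝ), (q:ℝ)) =
      if Even k then (((g^[k] p : ℤ):ℝ), ((g^[k] q : ℤ):ℝ))
      else (((g^[k] q : ℤ):ℝ), ((g^[k] p : ℤ):ℝ)) := by
    intro k
    induction k with
    | zero => intro p q; simp
    | succ k ih =>
      intro p q
      rw [Function.iterate_succ_apply]
      have hA : A l ((p:ℝ),(q:ℝ)) = (((g q : ℤ):ℝ), ((g p : ℤ):ℝ)) := by
        simp [A, hgdef]
      rw [hA, ih]
      rcases Nat.even_or_odd k with he | ho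
      · simp [he, Nat.even_add_one, Function.iterate_succ_apply]
      · simp [Nat.not_even_iff_odd.2 ho, ho, Nat.even_add_one, Function.iterate_succ_apply]
  -- initial step
  set a : ℤ := ⌊l * y⌋ with hadef
  set b : ℤ := ⌊l * x⌋ with hbdef
  have ha : 0 ≤ a := Int.le_floor.2 (by push_cast; positivity)
  have hb : b ≤ -((m:ℤ)+1) := by
    have h' : l * x < -(m:ℝ) := by
      have := (lt_div_iff₀ hl0).1 (by rwa [neg_div] at hx); linarith
    have : b < -(m:ℤ) := Int.floor_lt.2 (by push_cast; linarith)
    omega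
  have hA1 : A l (x, y) = ((a:ℝ), (b:ℝ)) := by simp [A, hadef, hbdef]
  set N : ℕ := a.toNat + (-b - m).toNat with hNdef
  have key : ∀ n : ℕ, N ≤ n → g^[n] a = 0 ∧ g^[n] b = -(m:ℤ) := by
    intro n hn
    refine ⟨iter_pos n a ha (by omega), iter_neg n b (by omega) (by omega)⟩
  set u : ℕ → ℝ × ℝ := fun n => (A l)^[n] (x, y) with hudef
  set P : ℝ × ℝ := ((-(m:ℝ)), (0:ℝ)) with hPdef
  set Q : ℝ × ℝ := ((0:ℝ), (-(m:ℝ))) with hQdef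
  have form : ∀ n : ℕ, N + 1 ≤ n → u n = if Even n then P else Q := by
    intro n hn
    obtain ⟨k, rfl⟩ : ∃ k, n = k + 1 := ⟨n - 1, by omega⟩
    rw [hudef]
    simp only []
    rw [Function.iterate_succ_apply, hA1, iterA]
    obtain ⟨h0, hmm⟩ := key k (by omega)
    rw [h0, hmm]
    rcases Nat.even_or_odd k with he | ho
    · simp [he, Nat.even_add_one, hPdef, hQdef]
    · simp [Nat.not_even_iff_odd.2 ho, ho, Nat.even_add_one, hPdef, hQdef]
  have hev : ∀ᶠ n in Filter.atTop, u n ∈ ({P, Q} : Set (ℝ × ℝ)) := by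
    filter_upwards [Filter.eventually_ge_atTop (N+1)] with n hn
    rw [form n hn]
    by_cases h : Even n <;> simp [h]
  have hclP : MapClusterPt P Filter.atTop u := by
    apply MapClusterPt.of_comp (φ := fun n => 2 * (n + N + 1))
      (p := Filter.atTop)
    · apply Filter.tendsto_atTop_atTop.2
      intro c; exact ⟨c, fun a' ha' => by omega⟩
    · have : (u ∘ fun n => 2 * (n + N + 1)) = fun _ => P := by
        funext n
        simp only [Function.comp]
        rw [form _ (by omega)]
        simp [Nat.even_mul]
      rw [this]
      exact tendsto_const_nhds.mapClusterPt
  have hclQ : MapClusterPt Q Filter.atTop u := by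
    apply MapClusterPt.of_comp (φ := fun n => 2 * (n + N + 1) + 1)
      (p := Filter.atTop)
    · apply Filter.tendsto_atTop_atTop.2
      intro c; exact ⟨c, fun a' ha' => by omega⟩
    · have : (u ∘ fun n => 2 * (n + N + 1) + 1) = fun _ => Q := by
        funext n
        simp only [Function.comp]
        rw [form _ (by omega)]
        simp [Nat.even_add_one, Nat.even_mul]
      rw [this]
      exact tendsto_const_nhds.mapClusterPt
  ext r
  simp only [Set.mem_setOf_eq, Set.mem_insert_iff, Set.mem_singleton_iff]
  constructor
  · intro hr
    by_contra hcon
    push_neg at hcon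
    obtain ⟨hr1, hr2⟩ := hcon
    have hopen : IsOpen (({P, Q} : Set (ℝ × ℝ))ᶜ) :=
      ((Set.finite_singleton Q).insert P).isClosed.isOpen_compl
    have hmem : r ∈ ({P, Q} : Set (ℝ × ℝ))ᶜ := by simp [hr1, hr2]
    have hfreq := mapClusterPt_iff_frequently.1 hr _ (hopen.mem_nhds hmem)
    obtain ⟨n, hn1, hn2⟩ := (hfreq.and_eventually hev).exists
    exact hn1 hn2
  · rintro (rfl | rfl)
    · exact hclP
    · exact hclQ
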